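/- arXiv:1808.00318 — 4 statements merged into one kernel-verified Lean document; each statement's English description precedes it below -/
import Mathlib

section
/- Any 2×2 positive semidefinite matrix π satisfying the orthogonality-preserving conditions ⟨G_i|(I⊗I⊗π)|G_j⟩ = 0 for all distinct pairs i≠j from the eight three-qubit GHZ-basis states is a scalar multiple of the 2×2 identity matrix. -/
open scoped BigOperators ComplexOrder

noncomputable section

def ket3q (a b c : Fin 2) : Fin 2 → Fin 2 → Fin 2 → ℂ :=
  fun i j k => if i = a ∧ j = b ∧ k = c then 1 else 0

def ghz : Fin 8 → (Fin 2 → Fin 2 → Fin 2 → ℂ) :=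
  ![ket3q 0 0 0 + ket3q 1 1 1, ket3q 0 0 0 - ket3q 1 1 1,
    ket3q 0 0 1 + ket3q 1 1 0, ket3q 0 0 1 - ket3q 1 1 0,
    ket3q 0 1 0 + ket3q 1 0 1, ket3q 0 1 0 - ket3q 1 0 1,
    ket3q 0 1 1 + ket3q 1 0 0, ket3q 0 1 1 - ket3q 1 0 0]

def ip3q (ψ φ : Fin 2 → Fin 2 → Fin 2 → ℂ) : ℂ :=
  ∑ i, ∑ j, ∑ k, star (ψ i j k) * φ i j k

/-- Any 2×2 PSD matrix `π` acting on the third qubit that preserves the pairwise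
orthogonality of the eight GHZ-basis states is a scalar multiple of the identity. -/
theorem ghz_basis_locally_irreducible (π : Matrix (Fin 2) (Fin 2) ℂ)
    (hπ : π.PosSemidef)
    (h : ∀ x y : Fin 8, x ≠ y →
      (∑ i, ∑ j, ∑ k, star (ghz x i j k) * (∑ k', π k k' * ghz y i j k')) = 0) :
    ∃ c : ℂ, π = c • (1 : Matrix (Fin 2) (Fin 2) ℂ) := by
  have h01 := h 0 1 (by decide)
  have h02 := h 0 2 (by decide)
  have h03 := h 0 3 (by decide)
  simp only [ghz, ket3q, Fin.sum_univ_succ, Fin.sum_univ_zero, Matrix.cons_val_zero,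
    Matrix.cons_val_one, Matrix.head_cons, Pi.add_apply, Pi.sub_apply,
    Fin.isValue, show (0:Fin 2) ≠ 1 by decide, show (1:Fin 2) ≠ 0 by decide,
    if_true, if_false, and_true, and_false, true_and, false_and, and_self,
    if_pos rfl, eq_self_iff_true, one_ne_zero, zero_ne_one, ite_true, ite_false,
    map_one, map_zero, star_one, star_zero] at h01 h02 h03
  norm_num [ket3q, Fin.ext_iff, Matrix.vecHead, Matrix.vecTail] at h01 h02 h03
  simp only [Matrix.cons_val_succ', Matrix.cons_val', Matrix.cons_val_zero, Matrix.cons_val_one, Matrix.head_cons, Matrix.cons_val_two, Matrix.cons_val_three] at h02 h03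
  norm_num at h02 h03
  refine ⟨π 0 0, ?_⟩
  ext i j
  fin_cases i <;> fin_cases j <;> simp [Matrix.one_apply]
  · linear_combination (h02 + h03) / 2
  · linear_combination (h02 - h03) / 2
  · linear_combination -h01
end
end

section
/- Any 3×3 positive semidefinite matrix π satisfying ⟨ψ_i|(π⊗I⊗I)|ψ_j⟩ = 0 for all distinct pairs from the twelve product states |1⟩|2⟩|1±2⟩, |1⟩|3⟩|1±3⟩, |2⟩|1±2⟩|1⟩, |3⟩|1±3⟩|1⟩, |1±2⟩|1⟩|2⟩, |1±3⟩|1⟩|3⟩ on ℂ³⊗ℂ³⊗ℂ³ is a scalar multiple of the 3×3 identity. -/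
open scoped BigOperators ComplexOrder

noncomputable section

def e3 (i : Fin 3) : Fin 3 → ℂ := fun j => if j = i then 1 else 0

def tp3 (a b c : Fin 3 → ℂ) : Fin 3 → Fin 3 → Fin 3 → ℂ := fun i j k => a i * b j * c k

def ip3 (ψ φ : Fin 3 → Fin 3 → Fin 3 → ℂ) : ℂ := ∑ i, ∑ j, ∑ k, star (ψ i j k) * φ i j k

def states12 : Fin 12 → (Fin 3 → Fin 3 → Fin 3 → ℂ) :=
  ![tp3 (e3 0) (e3 1) (e3 0 + e3 1),
  tp3 (e3 0) (e3 1) (e3 0 - e3 1),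
  tp3 (e3 0) (e3 2) (e3 0 + e3 2),
  tp3 (e3 0) (e3 2) (e3 0 - e3 2),
  tp3 (e3 1) (e3 0 + e3 1) (e3 0),
  tp3 (e3 1) (e3 0 - e3 1) (e3 0),
  tp3 (e3 2) (e3 0 + e3 2) (e3 0),
  tp3 (e3 2) (e3 0 - e3 2) (e3 0),
  tp3 (e3 0 + e3 1) (e3 0) (e3 1),
  tp3 (e3 0 - e3 1) (e3 0) (e3 1),
  tp3 (e3 0 + e3 2) (e3 0) (e3 2),
  tp3 (e3 0 - e3 2) (e3 0) (e3 2)]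

def act1 (π : Matrix (Fin 3) (Fin 3) ℂ) (ψ : Fin 3 → Fin 3 → Fin 3 → ℂ) :
    Fin 3 → Fin 3 → Fin 3 → ℂ :=
  fun i j k => ∑ i', π i i' * ψ i' j k

set_option maxHeartbeats 2000000
set_option maxRecDepth 4000

/-- Any 3×3 PSD matrix acting on the first factor that preserves the pairwise
orthogonality of the twelve product states is a scalar multiple of the identity. -/
theorem twelve_states_first_party_trivial (π : Matrix (Fin 3) (Fin 3) ℂ)
    (hπ : π.PosSemidef)
    (h : ∀ x y : Fin 12, x ≠ y → ip3 (states12 x) (act1 π (states12 y)) = 0) :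
    ∃ c : ℂ, π = c • (1 : Matrix (Fin 3) (Fin 3) ℂ) := by
  have h04 : ip3 (tp3 (e3 0) (e3 1) (e3 0 + e3 1)) (act1 π (tp3 (e3 1) (e3 0 + e3 1) (e3 0))) = 0 := h 0 4 (by decide)
  have h40 : ip3 (tp3 (e3 1) (e3 0 + e3 1) (e3 0)) (act1 π (tp3 (e3 0) (e3 1) (e3 0 + e3 1))) = 0 := h 4 0 (by decide)
  have h26 : ip3 (tp3 (e3 0) (e3 2) (e3 0 + e3 2)) (act1 π (tp3 (e3 2) (e3 0 + e3 2) (e3 0))) = 0 := h 2 6 (by decide)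
  have h62 : ip3 (tp3 (e3 2) (e3 0 + e3 2) (e3 0)) (act1 π (tp3 (e3 0) (e3 2) (e3 0 + e3 2))) = 0 := h 6 2 (by decide)
  have h46 : ip3 (tp3 (e3 1) (e3 0 + e3 1) (e3 0)) (act1 π (tp3 (e3 2) (e3 0 + e3 2) (e3 0))) = 0 := h 4 6 (by decide)
  have h64 : ip3 (tp3 (e3 2) (e3 0 + e3 2) (e3 0)) (act1 π (tp3 (e3 1) (e3 0 + e3 1) (e3 0))) = 0 := h 6 4 (by decide)
  have h89 : ip3 (tp3 (e3 0 + e3 1) (e3 0) (e3 1)) (act1 π (tp3 (e3 0 - e3 1) (e3 0) (e3 1))) = 0 := h 8 9 (by decide)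
  have hAB : ip3 (tp3 (e3 0 + e3 2) (e3 0) (e3 2)) (act1 π (tp3 (e3 0 - e3 2) (e3 0) (e3 2))) = 0 := h 10 11 (by decide)
  simp [ip3, act1, tp3, e3, Fin.sum_univ_three] at h04 h40 h26 h62 h46 h64 h89 hAB
  have hd1 : π 1 1 = π 0 0 := by linear_combination -h89 - h04 + h40
  have hd2 : π 2 2 = π 0 0 := by linear_combination -hAB - h26 + h62
  refine ⟨π 0 0, ?_⟩
  ext i j
  fin_cases i <;> fin_cases j <;>
    simp [Matrix.one_apply, h04, h40, h26, h62, h46, h64, hd1, hd2]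
end
end

section
/- Any 4×4 positive semidefinite matrix π satisfying ⟨ψ_i|(π⊗I₄⊗I₄)|ψ_j⟩ = 0 for all distinct pairs among the eighteen product states |1⟩|2⟩|1±2⟩, |1⟩|3⟩|1±3⟩, |1⟩|4⟩|1±4⟩, |2⟩|1±2⟩|1⟩, |3⟩|1±3⟩|1⟩, |4⟩|1±4⟩|1⟩, |1±2⟩|1⟩|2⟩, |1±3⟩|1⟩|3⟩, |1±4⟩|1⟩|4⟩ on ℂ⁴⊗ℂ⁴⊗ℂ⁴ is a scalar multiple of the 4×4 identity. -/
open scoped BigOperators ComplexOrder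

noncomputable section

def e4 (i : Fin 4) : Fin 4 → ℂ := fun j => if j = i then 1 else 0

def tp4 (a b c : Fin 4 → ℂ) : Fin 4 → Fin 4 → Fin 4 → ℂ := fun i j k => a i * b j * c k

def ip4 (ψ φ : Fin 4 → Fin 4 → Fin 4 → ℂ) : ℂ := ∑ i, ∑ j, ∑ k, star (ψ i j k) * φ i j k

def states18 : Fin 18 → (Fin 4 → Fin 4 → Fin 4 → ℂ) :=
  ![tp4 (e4 0) (e4 1) (e4 0 + e4 1),
  tp4 (e4 0) (e4 1) (e4 0 - e4 1),
  tp4 (e4 0) (e4 2) (e4 0 + e4 2),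
  tp4 (e4 0) (e4 2) (e4 0 - e4 2),
  tp4 (e4 0) (e4 3) (e4 0 + e4 3),
  tp4 (e4 0) (e4 3) (e4 0 - e4 3),
  tp4 (e4 1) (e4 0 + e4 1) (e4 0),
  tp4 (e4 1) (e4 0 - e4 1) (e4 0),
  tp4 (e4 2) (e4 0 + e4 2) (e4 0),
  tp4 (e4 2) (e4 0 - e4 2) (e4 0),
  tp4 (e4 3) (e4 0 + e4 3) (e4 0),
  tp4 (e4 3) (e4 0 - e4 3) (e4 0),
  tp4 (e4 0 + e4 1) (e4 0) (e4 1),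
  tp4 (e4 0 - e4 1) (e4 0) (e4 1),
  tp4 (e4 0 + e4 2) (e4 0) (e4 2),
  tp4 (e4 0 - e4 2) (e4 0) (e4 2),
  tp4 (e4 0 + e4 3) (e4 0) (e4 3),
  tp4 (e4 0 - e4 3) (e4 0) (e4 3)]

def act1q (π : Matrix (Fin 4) (Fin 4) ℂ) (ψ : Fin 4 → Fin 4 → Fin 4 → ℂ) :
    Fin 4 → Fin 4 → Fin 4 → ℂ :=
  fun i j k => ∑ i', π i i' * ψ i' j k

set_option maxHeartbeats 4000000 in
/-- Any 4×4 PSD matrix acting on the first factor preserving the pairwise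
orthogonality of the eighteen product states is a scalar multiple of the identity. -/
theorem eighteen_states_first_party_trivial (π : Matrix (Fin 4) (Fin 4) ℂ)
    (hπ : π.PosSemidef)
    (h : ∀ x y : Fin 18, x ≠ y → ip4 (states18 x) (act1q π (states18 y)) = 0) :
    ∃ c : ℂ, π = c • (1 : Matrix (Fin 4) (Fin 4) ℂ) := by
  have key : ∀ x y : Fin 18, x ≠ y →
      (∑ i, ∑ j, ∑ k, star (states18 x i j k) * ∑ i', π i i' * states18 y i' j k) = 0 := by
    intro x y hxy; exact h x y hxy
  have s0 : states18 0 = tp4 (e4 0) (e4 1) (e4 0 + e4 1) := rfl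
  have s2 : states18 2 = tp4 (e4 0) (e4 2) (e4 0 + e4 2) := rfl
  have s4 : states18 4 = tp4 (e4 0) (e4 3) (e4 0 + e4 3) := rfl
  have s6 : states18 6 = tp4 (e4 1) (e4 0 + e4 1) (e4 0) := rfl
  have s8 : states18 8 = tp4 (e4 2) (e4 0 + e4 2) (e4 0) := rfl
  have s10 : states18 10 = tp4 (e4 3) (e4 0 + e4 3) (e4 0) := rfl
  have s12 : states18 12 = tp4 (e4 0 + e4 1) (e4 0) (e4 1) := rfl
  have s13 : states18 13 = tp4 (e4 0 - e4 1) (e4 0) (e4 1) := rfl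
  have s14 : states18 14 = tp4 (e4 0 + e4 2) (e4 0) (e4 2) := rfl
  have s15 : states18 15 = tp4 (e4 0 - e4 2) (e4 0) (e4 2) := rfl
  have s16 : states18 16 = tp4 (e4 0 + e4 3) (e4 0) (e4 3) := rfl
  have s17 : states18 17 = tp4 (e4 0 - e4 3) (e4 0) (e4 3) := rfl
  have h01 := key 0 6 (by decide)
  rw [s0, s6] at h01
  simp [tp4, e4, Fin.sum_univ_four] at h01
  have h02 := key 2 8 (by decide)
  rw [s2, s8] at h02
  simp [tp4, e4, Fin.sum_univ_four] at h02
  have h03 := key 4 10 (by decide)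
  rw [s4, s10] at h03
  simp [tp4, e4, Fin.sum_univ_four] at h03
  have h10 := key 6 0 (by decide)
  rw [s6, s0] at h10
  simp [tp4, e4, Fin.sum_univ_four] at h10
  have h20 := key 8 2 (by decide)
  rw [s8, s2] at h20
  simp [tp4, e4, Fin.sum_univ_four] at h20
  have h30 := key 10 4 (by decide)
  rw [s10, s4] at h30
  simp [tp4, e4, Fin.sum_univ_four] at h30
  have h12 := key 6 8 (by decide)
  rw [s6, s8] at h12
  simp [tp4, e4, Fin.sum_univ_four] at h12
  have h21 := key 8 6 (by decide)
  rw [s8, s6] at h21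
  simp [tp4, e4, Fin.sum_univ_four] at h21
  have h13 := key 6 10 (by decide)
  rw [s6, s10] at h13
  simp [tp4, e4, Fin.sum_univ_four] at h13
  have h31 := key 10 6 (by decide)
  rw [s10, s6] at h31
  simp [tp4, e4, Fin.sum_univ_four] at h31
  have h23 := key 8 10 (by decide)
  rw [s8, s10] at h23
  simp [tp4, e4, Fin.sum_univ_four] at h23
  have h32 := key 10 8 (by decide)
  rw [s10, s8] at h32
  simp [tp4, e4, Fin.sum_univ_four] at h32
  have d1 := key 12 13 (by decide)
  rw [s12, s13] at d1
  simp [tp4, e4, Fin.sum_univ_four] at d1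
  have d2 := key 14 15 (by decide)
  rw [s14, s15] at d2
  simp [tp4, e4, Fin.sum_univ_four] at d2
  have d3 := key 16 17 (by decide)
  rw [s16, s17] at d3
  simp [tp4, e4, Fin.sum_univ_four] at d3
  have e1 : π 1 1 = π 0 0 := by linear_combination -d1 - h01 + h10
  have e2 : π 2 2 = π 0 0 := by linear_combination -d2 - h02 + h20
  have e3 : π 3 3 = π 0 0 := by linear_combination -d3 - h03 + h30
  refine ⟨π 0 0, ?_⟩
  ext i j
  fin_cases i <;> fin_cases j <;>
    simp [Matrix.one_apply, h01, h02, h03, h10, h20, h30, h12, h21, h13, h31, h23, h32, e1, e2, e3]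
end
end

section
/- Any 3×3 positive semidefinite matrix π acting on the second tensor factor that satisfies ⟨ψ_i|(I⊗π⊗I)|ψ_j⟩ = 0 for all distinct pairs of the twelve product states |1⟩|2⟩|1±2⟩, |1⟩|3⟩|1±3⟩, |2⟩|1±2⟩|1⟩, |3⟩|1±3⟩|1⟩, |1±2⟩|1⟩|2⟩, |1±3⟩|1⟩|3⟩ on ℂ³⊗ℂ³⊗ℂ³ is a scalar multiple of the 3×3 identity. -/
open scoped BigOperators ComplexOrder

noncomputable section

def act2 (π : Matrix (Fin 3) (Fin 3) ℂ) (ψ : Fin 3 → Fin 3 → Fin 3 → ℂ) :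
    Fin 3 → Fin 3 → Fin 3 → ℂ :=
  fun i j k => ∑ j', π j j' * ψ i j' k

/-- Any 3×3 PSD matrix acting on the second (middle) factor that preserves the
pairwise orthogonality of the twelve product states is a scalar multiple of the
identity. -/
theorem twelve_states_second_party_trivial (π : Matrix (Fin 3) (Fin 3) ℂ)
    (hπ : π.PosSemidef)
    (h : ∀ x y : Fin 12, x ≠ y → ip3 (states12 x) (act2 π (states12 y)) = 0) :
    ∃ c : ℂ, π = c • (1 : Matrix (Fin 3) (Fin 3) ℂ) := by

  have s0 : states12 0 = tp3 (e3 0) (e3 1) (e3 0 + e3 1) := rfl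
  have s2 : states12 2 = tp3 (e3 0) (e3 2) (e3 0 + e3 2) := rfl
  have s4 : states12 4 = tp3 (e3 1) (e3 0 + e3 1) (e3 0) := rfl
  have s5 : states12 5 = tp3 (e3 1) (e3 0 - e3 1) (e3 0) := rfl
  have s6 : states12 6 = tp3 (e3 2) (e3 0 + e3 2) (e3 0) := rfl
  have s7 : states12 7 = tp3 (e3 2) (e3 0 - e3 2) (e3 0) := rfl
  have s8 : states12 8 = tp3 (e3 0 + e3 1) (e3 0) (e3 1) := rfl
  have s10 : states12 10 = tp3 (e3 0 + e3 2) (e3 0) (e3 2) := rfl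
  have e1 := h 0 2 (by decide)
  have e2 := h 2 0 (by decide)
  have e3' := h 0 8 (by decide)
  have e4 := h 8 0 (by decide)
  have e5 := h 2 10 (by decide)
  have e6 := h 10 2 (by decide)
  have e7 := h 4 5 (by decide)
  have e8 := h 6 7 (by decide)
  rw [s0, s2] at e1
  rw [s2, s0] at e2
  rw [s0, s8] at e3'
  rw [s8, s0] at e4
  rw [s2, s10] at e5
  rw [s10, s2] at e6
  rw [s4, s5] at e7
  rw [s6, s7] at e8
  simp [tp3, e3, act2, ip3, Fin.sum_univ_three] at e1 e2 e3' e4 e5 e6 e7 e8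
  refine ⟨π 0 0, ?_⟩
  ext i j
  fin_cases i <;> fin_cases j <;>
    simp [Matrix.one_apply] <;>
    first
    | linear_combination e1 | linear_combination e2 | linear_combination e3'
    | linear_combination e4 | linear_combination e5 | linear_combination e6
    | linear_combination e3' - e4 - e7 | linear_combination e5 - e6 - e8
end
end
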